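/- Let C* be a finite set of points in a metric space (X, d) and let T = (V, E, r) be a neighborhood tree with respect to C*. Let E₀ ⊆ E, let L = Σ_{e∈E₀} L_e be the total length of the edges in E₀ (where the length of an edge e = (v, v') is L_e = d(v, v')), and let L' > 0 be a real number with L' ≥ 2L such that every edge in E ∖ E₀ has length at least L'. Let A ⊆ V be the vertex set of a connected component of the graph (V, E₀) with r ∉ A. Then d(A, C* ∖ A) ≥ L'/2. -/

import Mathlib

namespace CKM

/-- A rooted tree on a finite vertex set `V` of points of `X`, encoded by its parent
function: every vertex reaches the root by iterating `parent`, and the root is a fixed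
point of `parent`. The edges of the tree are the pairs `(v, parent v)` for `v ∈ V`,
`v ≠ root`. -/
structure RootedTree (X : Type) where
  V : Finset X
  root : X
  root_mem : root ∈ V
  parent : X → X
  parent_mem : ∀ v ∈ V, parent v ∈ V
  parent_root : parent root = root
  reaches_root : ∀ v ∈ V, ∃ n : ℕ, parent^[n] v = root

/-- `Λ_T(v)`: the set of vertices in the subtree of `T` rooted at `v`. -/
def RootedTree.subtree {X : Type} (T : RootedTree X) (v : X) : Set X :=
  { w | w ∈ T.V ∧ ∃ n : ℕ, T.parent^[n] w = v }

/-- A rooted tree `T` with vertices among `Cs` is a *neighborhood tree* with respect to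
`Cs` if for every non-root vertex `v`, `d(v, Cs ∖ Λ_T(v)) = d(v, ρ_T(v))`, i.e. the
parent of `v` is a nearest point to `v` among all points of `Cs` outside the subtree
of `v`. -/
def IsNeighborhoodTree {X : Type} [PseudoMetricSpace X] (Cs : Finset X)
    (T : RootedTree X) : Prop :=
  (∀ v ∈ T.V, v ∈ Cs) ∧
  ∀ v ∈ T.V, v ≠ T.root →
    ∀ w ∈ Cs, w ∉ T.subtree v → dist v (T.parent v) ≤ dist v w

end CKM

open CKM

section Helpers

variable {X : Type}

private lemma ckm_iterate_root (T : RootedTree X) (t : ℕ) :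
    T.parent^[t] T.root = T.root :=
  Function.iterate_fixed T.parent_root t

private lemma ckm_iterate_mem (T : RootedTree X) {x : X} (hx : x ∈ T.V) (t : ℕ) :
    T.parent^[t] x ∈ T.V := by
  induction t with
  | zero => simpa
  | succ t ih => rw [Function.iterate_succ_apply']; exact T.parent_mem _ ih

private lemma ckm_noCycle (T : RootedTree X) {x : X} (hx : x ∈ T.V) {m : ℕ}
    (hm : 1 ≤ m) (h : T.parent^[m] x = x) : x = T.root := by
  obtain ⟨N, hN⟩ := T.reaches_root x hx
  have key : ∀ q : ℕ, T.parent^[q * m] x = x := by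
    intro q
    induction q with
    | zero => simp
    | succ q ih =>
      rw [Nat.succ_mul, Function.iterate_add_apply, h]
      exact ih
  calc x = T.parent^[N * m] x := (key N).symm
    _ = T.parent^[N * m - N] (T.parent^[N] x) := by
        rw [← Function.iterate_add_apply]
        congr 1
        have : N ≤ N * m := Nat.le_mul_of_pos_right N hm
        omega
    _ = T.root := by rw [hN, ckm_iterate_root]

private lemma ckm_dist_iterate_le [PseudoMetricSpace X] (T : RootedTree X) (x : X) (t : ℕ) :
    dist x (T.parent^[t] x)
      ≤ ∑ j ∈ Finset.range t, dist (T.parent^[j] x) (T.parent^[j + 1] x) := by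
  induction t with
  | zero => simp
  | succ t ih =>
    rw [Finset.sum_range_succ]
    calc dist x (T.parent^[t + 1] x)
        ≤ dist x (T.parent^[t] x) + dist (T.parent^[t] x) (T.parent^[t + 1] x) :=
          dist_triangle _ _ _
      _ ≤ _ := by linarith

private lemma ckm_sum_chain_le [PseudoMetricSpace X] (T : RootedTree X) (W : Finset X)
    (hWroot : ∀ v ∈ W, v ≠ T.root) {x : X} (hx : x ∈ T.V) (t : ℕ)
    (hmem : ∀ j < t, T.parent^[j] x ∈ W) :
    ∑ j ∈ Finset.range t, dist (T.parent^[j] x) (T.parent^[j + 1] x)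
      ≤ ∑ v ∈ W, dist v (T.parent v) := by
  classical
  have hinj : ∀ j ∈ Finset.range t, ∀ i ∈ Finset.range t,
      T.parent^[j] x = T.parent^[i] x → j = i := by
    intro j hj i hi hEq
    by_contra hne
    wlog hlt : i < j generalizing i j
    · exact this i hi j hj hEq.symm (Ne.symm hne) (by omega)
    have hcyc : T.parent^[j - i] (T.parent^[i] x) = T.parent^[i] x := by
      rw [← Function.iterate_add_apply, show j - i + i = j from by omega]
      exact hEq
    have : T.parent^[i] x = T.root :=
      ckm_noCycle T (ckm_iterate_mem T hx i) (by omega) hcyc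
    exact hWroot _ (hmem i (Finset.mem_range.mp hi)) this
  have himg : (Finset.range t).image (fun j => T.parent^[j] x) ⊆ W := by
    intro y hy
    obtain ⟨j, hj, rfl⟩ := Finset.mem_image.mp hy
    exact hmem j (Finset.mem_range.mp hj)
  calc ∑ j ∈ Finset.range t, dist (T.parent^[j] x) (T.parent^[j + 1] x)
      = ∑ j ∈ Finset.range t, dist (T.parent^[j] x) (T.parent (T.parent^[j] x)) := by
        apply Finset.sum_congr rfl
        intro j _
        rw [Function.iterate_succ_apply']
    _ = ∑ y ∈ (Finset.range t).image (fun j => T.parent^[j] x), dist y (T.parent y) := by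
        rw [Finset.sum_image hinj]
    _ ≤ ∑ v ∈ W, dist v (T.parent v) :=
        Finset.sum_le_sum_of_subset_of_nonneg himg (fun _ _ _ => dist_nonneg)

private lemma ckm_step_iff (T : RootedTree X) {z y : X} (hzy : z ≠ y) :
    (∃ m, T.parent^[m] z = y) ↔ (∃ m, T.parent^[m] (T.parent z) = y) := by
  constructor
  · rintro ⟨m, hm⟩
    cases m with
    | zero => simp at hm; exact absurd hm hzy
    | succ m => exact ⟨m, by rwa [Function.iterate_succ_apply] at hm⟩
  · rintro ⟨m, hm⟩
    exact ⟨m + 1, by rwa [Function.iterate_succ_apply]⟩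

private lemma ckm_separation (T : RootedTree X) (W : Finset X) {y : X} (hy : y ∉ W)
    {p q : X}
    (h : Relation.ReflTransGen
      (fun p q : X => (p ∈ W ∧ T.parent p = q) ∨ (q ∈ W ∧ T.parent q = p)) p q) :
    (∃ m, T.parent^[m] p = y) ↔ (∃ m, T.parent^[m] q = y) := by
  induction h with
  | refl => exact Iff.rfl
  | tail _ hstep ih =>
    rw [ih]
    rcases hstep with ⟨hbW, hbc⟩ | ⟨hcW, hcb⟩
    · rw [← hbc]
      exact ckm_step_iff T (by intro h; exact hy (h ▸ hbW))
    · rw [← hcb]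
      exact (ckm_step_iff T (by intro h; exact hy (h ▸ hcW))).symm

private lemma ckm_reach_symm {R : X → X → Prop} (hsymm : Symmetric R) {p q : X}
    (h : Relation.ReflTransGen R p q) : Relation.ReflTransGen R q p := by
  induction h with
  | refl => exact .refl
  | tail _ hstep ih => exact .head (hsymm hstep) ih

private lemma ckm_reach_chain (T : RootedTree X) (W : Finset X) (b : X) (k : ℕ)
    (h : ∀ j < k, T.parent^[j] b ∈ W) :
    Relation.ReflTransGen
      (fun p q : X => (p ∈ W ∧ T.parent p = q) ∨ (q ∈ W ∧ T.parent q = p))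
      b (T.parent^[k] b) := by
  induction k with
  | zero => exact .refl
  | succ k ih =>
    refine (ih (fun j hj => h j (by omega))).tail ?_
    exact Or.inl ⟨h k (by omega), (Function.iterate_succ_apply' _ _ _).symm⟩

end Helpers


/-- **Claim 4.6.** Let `T = (V, E, r)` be a neighborhood tree with respect to `Cs`.
Identify each edge of `T` with its lower endpoint, so that a subset `E₀ ⊆ E` is a set
`W` of non-root vertices (the edge associated with `v` being `(v, ρ_T(v))`, of length
`d(v, ρ_T(v))`). Let `L` be the total length of the edges in `E₀`, and let `L' > 0`
satisfy `L' ≥ 2L` with every edge of `E ∖ E₀` of length at least `L'`. If `A` is the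
vertex set of a connected component of `(V, E₀)` with `r ∉ A`, then
`d(A, Cs ∖ A) ≥ L'/2`. -/
theorem stmt16 (X : Type) [PseudoMetricSpace X] (Cs : Finset X)
    (T : CKM.RootedTree X) (hT : IsNeighborhoodTree Cs T)
    (W : Finset X) (hW : ∀ v ∈ W, v ∈ T.V ∧ v ≠ T.root)
    (L : ℝ) (hL : L = ∑ v ∈ W, dist v (T.parent v))
    (L' : ℝ) (hL'pos : 0 < L') (hL'L : 2 * L ≤ L')
    (hlong : ∀ v ∈ T.V, v ≠ T.root → v ∉ W → L' ≤ dist v (T.parent v))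
    (A : Finset X) (hAne : A.Nonempty) (hAV : ∀ a ∈ A, a ∈ T.V)
    (hroot : T.root ∉ A)
    -- `A` is the vertex set of a connected component of the graph `(V, E₀)`:
    -- a point is in `A` iff it is reachable from a point of `A` by edges of `E₀`.
    (hcomp : ∀ a ∈ A, ∀ b : X,
      Relation.ReflTransGen
        (fun p q : X => (p ∈ W ∧ T.parent p = q) ∨ (q ∈ W ∧ T.parent q = p)) a b
      ↔ b ∈ A) :
    ∀ a ∈ A, ∀ b ∈ Cs, b ∉ A → L' / 2 ≤ dist a b := by
  classical
  intro a ha b hbCs hbA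
  set R := fun p q : X => (p ∈ W ∧ T.parent p = q) ∨ (q ∈ W ∧ T.parent q = p) with hR
  have hRsymm : Symmetric R := by
    intro p q h
    rcases h with h | h
    · exact Or.inr h
    · exact Or.inl h
  have hrootW : ∀ v ∈ W, v ≠ T.root := fun v hv => (hW v hv).2
  have haV : a ∈ T.V := hAV a ha
  have hL2 : L ≤ L' / 2 := by linarith
  -- the exit vertex of `a`'s ancestor chain out of `A`
  have hex : ∃ m, T.parent^[m] a ∉ A := by
    obtain ⟨N, hN⟩ := T.reaches_root a haV
    exact ⟨N, by rw [hN]; exact hroot⟩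
  set n := Nat.find hex with hn
  have hnA : T.parent^[n] a ∉ A := Nat.find_spec hex
  have hnmin : ∀ k < n, T.parent^[k] a ∈ A := fun k hk => not_not.mp (Nat.find_min hex hk)
  have hn1 : 1 ≤ n := by
    rcases Nat.eq_zero_or_pos n with h | h
    · exfalso; apply hnA; rw [h]; simpa using ha
    · exact h
  set v := T.parent^[n - 1] a with hv
  have hvA : v ∈ A := hnmin _ (by omega)
  have hPv : T.parent v = T.parent^[n] a := by
    have h' : T.parent^[(n - 1) + 1] a = T.parent (T.parent^[n - 1] a) :=
      Function.iterate_succ_apply' _ _ _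
    rw [hv, ← h']
    congr 1
    omega
  have hPvA : T.parent v ∉ A := by rw [hPv]; exact hnA
  have hvV : v ∈ T.V := ckm_iterate_mem T haV _
  have hvroot : v ≠ T.root := fun h => hroot (h ▸ hvA)
  have hvW : v ∉ W := by
    intro hvW
    exact hPvA ((hcomp v hvA _).mp (Relation.ReflTransGen.single (Or.inl ⟨hvW, rfl⟩)))
  have hvlong : L' ≤ dist v (T.parent v) := hlong v hvV hvroot hvW
  -- edges inside `A` belong to `W`
  have edgeW : ∀ x, x ∈ T.V → x ∈ A → T.parent x ∈ A → x ∈ W := by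
    intro x hxV hxA hPxA
    by_contra hxW
    have hreach : Relation.ReflTransGen R x (T.parent x) := (hcomp x hxA _).mpr hPxA
    obtain ⟨m, hm⟩ := (ckm_separation T W hxW hreach).mp ⟨0, by simp⟩
    have hxr : x = T.root :=
      ckm_noCycle T hxV (m := m + 1) (by omega)
        (by rw [Function.iterate_succ_apply]; exact hm)
    exact hroot (hxr ▸ hxA)
  have hdav : dist a v ≤ L := by
    rw [hL, hv]
    calc dist a (T.parent^[n - 1] a)
        ≤ ∑ j ∈ Finset.range (n - 1), dist (T.parent^[j] a) (T.parent^[j + 1] a) :=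
          ckm_dist_iterate_le T a (n - 1)
      _ ≤ _ := by
          apply ckm_sum_chain_le T W hrootW haV (n - 1)
          intro j hj
          exact edgeW _ (ckm_iterate_mem T haV j) (hnmin j (by omega))
            (by rw [← Function.iterate_succ_apply' T.parent j a]
                exact hnmin (j + 1) (by omega))
  by_cases hbsub : b ∈ T.subtree v
  · -- `b` lies in the subtree of `v`: use the exit of `b`'s `W`-component instead
    obtain ⟨hbV, n', hn'⟩ := hbsub
    have hexb : ∃ m, T.parent^[m] b ∉ W := by
      obtain ⟨N, hN⟩ := T.reaches_root b hbV
      exact ⟨N, by rw [hN]; exact fun h => (hW _ h).2 rfl⟩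
    set k := Nat.find hexb with hk
    have hkW : T.parent^[k] b ∉ W := Nat.find_spec hexb
    have hkmin : ∀ j < k, T.parent^[j] b ∈ W := fun j hj => not_not.mp (Nat.find_min hexb hj)
    set w := T.parent^[k] b with hw
    have hwV : w ∈ T.V := ckm_iterate_mem T hbV _
    have hreach_bw : Relation.ReflTransGen R b w := ckm_reach_chain T W b k hkmin
    have hwA : w ∉ A := by
      intro hwA
      exact hbA ((hcomp w hwA b).mp (ckm_reach_symm hRsymm hreach_bw))
    have hkn' : k ≤ n' := by
      by_contra h
      push_neg at h
      exact hvW (hn' ▸ hkmin n' h)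
    have hvw : T.parent^[n' - k] w = v := by
      rw [hw, ← Function.iterate_add_apply, show n' - k + k = n' from by omega]
      exact hn'
    have hwroot : w ≠ T.root := by
      intro h
      apply hroot
      have : v = T.root := by rw [← hvw, h, ckm_iterate_root]
      exact this ▸ hvA
    have hwlong : L' ≤ dist w (T.parent w) := hlong w hwV hwroot hkW
    have hdbw : dist b w ≤ L := by
      rw [hL, hw]
      calc dist b (T.parent^[k] b)
          ≤ ∑ j ∈ Finset.range k, dist (T.parent^[j] b) (T.parent^[j + 1] b) :=
            ckm_dist_iterate_le T b k
        _ ≤ _ := ckm_sum_chain_le T W hrootW hbV k hkmin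
    have hasub : a ∉ T.subtree w := by
      rintro ⟨-, j, hj⟩
      have hjn : n ≤ j := by
        by_contra h
        push_neg at h
        exact hwA (hj ▸ hnmin j h)
      have hwv : T.parent^[j - (n - 1)] v = w := by
        rw [hv, ← Function.iterate_add_apply, show j - (n - 1) + (n - 1) = j from by omega]
        exact hj
      have hcyc : T.parent^[(j - (n - 1)) + (n' - k)] w = w := by
        rw [Function.iterate_add_apply, hvw, hwv]
      exact hwroot (ckm_noCycle T hwV (by omega) hcyc)
    have hnb : dist w (T.parent w) ≤ dist w a := hT.2 w hwV hwroot a (hT.1 a haV) hasub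
    have htri : dist w a ≤ dist w b + dist b a := dist_triangle w b a
    have h1 : dist w b = dist b w := dist_comm _ _
    have h2 : dist b a = dist a b := dist_comm _ _
    linarith
  · -- `b` is outside the subtree of `v`: apply the neighborhood property at `v`
    have hnb : dist v (T.parent v) ≤ dist v b := hT.2 v hvV hvroot b hbCs hbsub
    have htri : dist v b ≤ dist v a + dist a b := dist_triangle v a b
    have h1 : dist v a = dist a v := dist_comm _ _
    linarith
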